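/- Let S be a finite p-group of nilpotency class two with exactly two elementary abelian subgroups A, B of maximal order satisfying AB = S and A ∩ B = Z(S). Then for every maximal (by order) abelian subgroup M of S, |M| ≤ |S : E| · |M ∩ E| for E ∈ {A, B}, and consequently |M| ≤ |A|; in particular A and B are abelian subgroups of maximal order in S. -/

import Mathlib

/-- A subgroup is elementary abelian of exponent 2-type: here for a general prime `p`,
abelian with every element of order dividing `p`. -/
def IsElemAbP {S : Type*} [Group S] (p : ℕ) (H : Subgroup S) : Prop :=
  (∀ x ∈ H, x ^ p = 1) ∧ ∀ x ∈ H, ∀ y ∈ H, Commute x y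

section Aux
variable {S : Type*} [Group S] [Finite S]

private lemma aux_ker (N M : Subgroup S) [N.Normal] :
    ((QuotientGroup.mk' N).comp M.subtype).ker = N.subgroupOf M := by
  ext x
  simp [MonoidHom.mem_ker, QuotientGroup.eq_one_iff, Subgroup.mem_subgroupOf]

private lemma aux_card_subgroupOf (N M : Subgroup S) :
    Nat.card (N.subgroupOf M) = Nat.card (M ⊓ N : Subgroup S) := by
  rw [← Subgroup.inf_subgroupOf_right]
  rw [inf_comm]
  exact Nat.card_congr (Subgroup.subgroupOfEquivOfLe inf_le_left).toEquiv

private lemma aux1 (N M : Subgroup S) [N.Normal] :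
    Nat.card M ≤ N.index * Nat.card (M ⊓ N : Subgroup S) := by
  set φ := (QuotientGroup.mk' N).comp M.subtype with hφ
  have h1 : Nat.card M = Nat.card (M ⧸ φ.ker) * Nat.card φ.ker :=
    Subgroup.card_eq_card_quotient_mul_card_subgroup φ.ker
  have h2 : Nat.card (M ⧸ φ.ker) ≤ N.index := by
    rw [Nat.card_congr (QuotientGroup.quotientKerEquivRange φ).toEquiv]
    exact le_trans (Subgroup.card_le_of_le le_top)
      (le_of_eq (by rw [Subgroup.index]; exact Nat.card_congr Subgroup.topEquiv.toEquiv))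
  calc Nat.card M = Nat.card (M ⧸ φ.ker) * Nat.card φ.ker := h1
    _ ≤ N.index * Nat.card φ.ker := Nat.mul_le_mul_right _ h2
    _ = N.index * Nat.card (M ⊓ N : Subgroup S) := by
        rw [aux_ker, aux_card_subgroupOf]

private lemma aux2 (N K : Subgroup S) [N.Normal]
    (hcov : ∀ x : S, ∃ a ∈ N, ∃ b ∈ K, x = a * b) :
    N.index * Nat.card (K ⊓ N : Subgroup S) = Nat.card K := by
  set φ := (QuotientGroup.mk' N).comp K.subtype with hφ
  have hsurj : Function.Surjective φ := by
    intro q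
    obtain ⟨s, rfl⟩ := QuotientGroup.mk'_surjective N q
    obtain ⟨a, ha, b, hb, hab⟩ := hcov s⁻¹
    refine ⟨⟨b⁻¹, K.inv_mem hb⟩, ?_⟩
    have hs : s = b⁻¹ * a⁻¹ := by
      rw [← mul_inv_rev, ← hab, inv_inv]
    show QuotientGroup.mk' N b⁻¹ = QuotientGroup.mk' N s
    rw [hs]
    refine (QuotientGroup.mk'_eq_mk' N).mpr ⟨a⁻¹, N.inv_mem ha, rfl⟩
  have h1 : Nat.card K = Nat.card (K ⧸ φ.ker) * Nat.card φ.ker :=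
    Subgroup.card_eq_card_quotient_mul_card_subgroup φ.ker
  have h2 : Nat.card (K ⧸ φ.ker) = N.index :=
    Nat.card_congr (QuotientGroup.quotientKerEquivOfSurjective φ hsurj).toEquiv
  rw [h1, h2, aux_ker, aux_card_subgroupOf]

end Aux

open scoped commutatorElement

/-- Let `S` be a finite `p`-group of class two with exactly two
elementary abelian subgroups `A, B` of maximal order satisfying `AB = S`,
`A ∩ B = Z(S)` and `C_E(x) = Z(S)` for `x ∉ E`, `E ∈ {A, B}`. Then every abelian
subgroup `M` of `S` satisfies `|M| ≤ |S : E|·|M ∩ E|` for `E ∈ {A, B}`, and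
consequently `|M| ≤ |A|`; in particular `A` and `B` are abelian subgroups of
maximal order in `S`. -/
theorem stmt_13 {p : ℕ} (hp : p.Prime) {S : Type*} [Group S] [Finite S]
    (hpS : IsPGroup p S) (hclass2 : commutator S ≤ Subgroup.center S)
    (A B : Subgroup S) (hA : IsElemAbP p A) (hB : IsElemAbP p B)
    (hmaxA : ∀ C : Subgroup S, IsElemAbP p C → Nat.card C ≤ Nat.card A)
    (hBA : Nat.card B = Nat.card A)
    (honly : ∀ C : Subgroup S, IsElemAbP p C → Nat.card C = Nat.card A → C = A ∨ C = B)
    (hprod : ∀ x : S, ∃ a ∈ A, ∃ b ∈ B, x = a * b)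
    (hAB : A ⊓ B = Subgroup.center S)
    (hcentA : ∀ x : S, x ∉ A → A ⊓ Subgroup.centralizer {x} = Subgroup.center S)
    (hcentB : ∀ x : S, x ∉ B → B ⊓ Subgroup.centralizer {x} = Subgroup.center S) :
    ∀ M : Subgroup S, (∀ x ∈ M, ∀ y ∈ M, Commute x y) →
      Nat.card M ≤ A.index * Nat.card (M ⊓ A : Subgroup S) ∧
      Nat.card M ≤ B.index * Nat.card (M ⊓ B : Subgroup S) ∧
      Nat.card M ≤ Nat.card A := by
  have hZA : Subgroup.center S ≤ A := by rw [← hAB]; exact inf_le_left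
  have hZB : Subgroup.center S ≤ B := by rw [← hAB]; exact inf_le_right
  have hnorm : ∀ E : Subgroup S, Subgroup.center S ≤ E → E.Normal := by
    intro E hZE
    refine ⟨fun a ha g => ?_⟩
    have hc : ⁅g, a⁆ ∈ Subgroup.center S :=
      hclass2 (Subgroup.commutator_mem_commutator (Subgroup.mem_top g) (Subgroup.mem_top a))
    have : g * a * g⁻¹ = ⁅g, a⁆ * a := by group
    rw [this]
    exact E.mul_mem (hZE hc) ha
  haveI hAn : A.Normal := hnorm A hZA
  haveI hBn : B.Normal := hnorm B hZB
  have eqA : A.index * Nat.card (B ⊓ A : Subgroup S) = Nat.card B :=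
    aux2 A B hprod
  intro M hM
  refine ⟨aux1 A M, aux1 B M, ?_⟩
  by_cases hMA : M ≤ A
  · exact Subgroup.card_le_of_le hMA
  · obtain ⟨x, hxM, hxA⟩ := SetLike.not_le_iff_exists.mp hMA
    have hsub : M ⊓ A ≤ Subgroup.center S := by
      rw [← hcentA x hxA]
      rintro y ⟨hyM, hyA⟩
      exact ⟨hyA, Subgroup.mem_centralizer_iff.mpr (by
        intro g hg
        have hgx : g = x := hg
        rw [hgx]
        exact hM x hxM y hyM)⟩
    have hZeq : Nat.card (M ⊓ A : Subgroup S) ≤ Nat.card (B ⊓ A : Subgroup S) := by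
      apply Subgroup.card_le_of_le
      refine le_trans hsub ?_
      rw [← hAB]; exact le_inf inf_le_right inf_le_left
    calc Nat.card M ≤ A.index * Nat.card (M ⊓ A : Subgroup S) := aux1 A M
      _ ≤ A.index * Nat.card (B ⊓ A : Subgroup S) := Nat.mul_le_mul_left _ hZeq
      _ = Nat.card B := eqA
      _ = Nat.card A := hBA
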